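/- arXiv:1710.04447 — 2 statements merged into one kernel-verified Lean document; each statement's English description precedes it below -/
import Mathlib

section
/- Let |c₀⟩, |c₁⟩ be unit vectors in ℂ² with 0 < |⟨c₀|c₁⟩| < 1, and suppose a unitary U on ℂ²⊗ℂ² satisfies U|c₀c₀⟩ = e^{iφ₀₀}|c₁c₁⟩, U|c₁c₁⟩ = e^{iφ₁₁}|c₀c₀⟩, U|c₀c₁⟩ = e^{iφ₀₁}|c₀c₁⟩, U|c₁c₀⟩ = e^{iφ₁₀}|c₁c₀⟩. Then, after multiplying U by the global phase e^{-iφ₀₀}, the phases satisfy e^{iφ₀₁} = e^{iφ₁₀} = e^{iφ₁₁/2} = ⟨c₀|c₁⟩/⟨c₁|c₀⟩. -/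
open Matrix

/-- The inner product ⟨x|y⟩ on ℂ². -/
noncomputable def inp (x y : Fin 2 → ℂ) : ℂ := star x ⬝ᵥ y

/-- The tensor product a ⊗ b of two vectors of ℂ², as a vector of ℂ²⊗ℂ². -/
def tv (a b : Fin 2 → ℂ) : Fin 2 × Fin 2 → ℂ := fun p => a p.1 * b p.2

lemma inp_tv (a b c d : Fin 2 → ℂ) : (star (tv a b)) ⬝ᵥ (tv c d) = inp a c * inp b d := by
  unfold inp tv
  simp only [dotProduct, Fintype.sum_prod_type, Pi.star_apply, star_mul']
  rw [Finset.sum_mul_sum]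
  exact Finset.sum_congr rfl fun i _ => Finset.sum_congr rfl fun j _ => by ring

lemma inp_smul_smul (e f : ℂ) (v w : Fin 2 × Fin 2 → ℂ) :
    (star (e • v)) ⬝ᵥ (f • w) = (starRingEnd ℂ) e * f * ((star v) ⬝ᵥ w) := by
  simp [dotProduct, Finset.mul_sum]
  congr 1; ext i; ring

lemma phase (θ θ' : ℝ) : (starRingEnd ℂ) (Complex.exp (Complex.I * θ)) *
    Complex.exp (Complex.I * θ') = Complex.exp (Complex.I * (θ' - θ)) := by
  rw [← Complex.exp_conj, ← Complex.exp_add]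
  congr 1
  rw [_root_.map_mul, Complex.conj_I, Complex.conj_ofReal]
  ring

/-- For a superposition-free unitary of "Class 3" (swapping |c₀c₀⟩ ↔ |c₁c₁⟩ and fixing
|c₀c₁⟩, |c₁c₀⟩ up to phases), after removing the global phase e^{iφ₀₀} the remaining
phases are fixed: e^{i(φ₀₁-φ₀₀)} = e^{i(φ₁₀-φ₀₀)} = ⟨c₀|c₁⟩/⟨c₁|c₀⟩ and
e^{i(φ₁₁-φ₀₀)} = (⟨c₀|c₁⟩/⟨c₁|c₀⟩)². -/
theorem stmt_5 (c₀ c₁ : Fin 2 → ℂ) (h₀ : inp c₀ c₀ = 1) (h₁ : inp c₁ c₁ = 1)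
    (hlow : 0 < ‖inp c₀ c₁‖) (hup : ‖inp c₀ c₁‖ < 1)
    (U : Matrix (Fin 2 × Fin 2) (Fin 2 × Fin 2) ℂ)
    (hU : U ∈ Matrix.unitaryGroup (Fin 2 × Fin 2) ℂ)
    (φ₀₀ φ₁₁ φ₀₁ φ₁₀ : ℝ)
    (h00 : U.mulVec (tv c₀ c₀) = Complex.exp (Complex.I * φ₀₀) • tv c₁ c₁)
    (h11 : U.mulVec (tv c₁ c₁) = Complex.exp (Complex.I * φ₁₁) • tv c₀ c₀)
    (h01 : U.mulVec (tv c₀ c₁) = Complex.exp (Complex.I * φ₀₁) • tv c₀ c₁)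
    (h10 : U.mulVec (tv c₁ c₀) = Complex.exp (Complex.I * φ₁₀) • tv c₁ c₀) :
    Complex.exp (Complex.I * (φ₀₁ - φ₀₀)) = inp c₀ c₁ / inp c₁ c₀ ∧
    Complex.exp (Complex.I * (φ₁₀ - φ₀₀)) = inp c₀ c₁ / inp c₁ c₀ ∧
    Complex.exp (Complex.I * (φ₁₁ - φ₀₀)) = (inp c₀ c₁ / inp c₁ c₀) ^ 2 := by
  have hUU : star U * U = 1 := hU.1
  have key : ∀ x y : Fin 2 × Fin 2 → ℂ,
      (star (U.mulVec x)) ⬝ᵥ (U.mulVec y) = (star x) ⬝ᵥ y := by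
    intro x y
    rw [Matrix.star_mulVec, Matrix.dotProduct_mulVec, Matrix.vecMul_vecMul]
    show star x ᵥ* (Uᴴ * U) ⬝ᵥ y = _
    rw [show Uᴴ * U = 1 from hUU, Matrix.vecMul_one]
  set s := inp c₀ c₁ with hs
  have hsne : s ≠ 0 := by
    intro h; rw [h] at hlow; simp at hlow
  have hcs : inp c₁ c₀ = (starRingEnd ℂ) s := by
    simp [inp, hs, dotProduct, map_sum, mul_comm]
  have hcsne : inp c₁ c₀ ≠ 0 := by
    rw [hcs]; simpa using hsne
  have e1 := key (tv c₀ c₀) (tv c₀ c₁)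
  rw [h00, h01, inp_smul_smul, inp_tv, inp_tv, phase, hcs, h₀, h₁] at e1
  have e2 := key (tv c₀ c₀) (tv c₁ c₀)
  rw [h00, h10, inp_smul_smul, inp_tv, inp_tv, phase, hcs, h₀, h₁] at e2
  have e3 := key (tv c₀ c₀) (tv c₁ c₁)
  rw [h00, h11, inp_smul_smul, inp_tv, inp_tv, phase, hcs] at e3
  refine ⟨?_, ?_, ?_⟩
  · rw [eq_div_iff hcsne, hcs]; linear_combination e1
  · rw [eq_div_iff hcsne, hcs]; linear_combination e2
  · rw [div_pow, eq_div_iff (pow_ne_zero 2 hcsne), hcs]; linear_combination e3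
end

section
/- Let |c₀⟩,|c₁⟩ be unit vectors in ℂ² with 0 < |⟨c₀|c₁⟩| < 1, and let W be a unitary on ℂ² with W|c₀⟩ = |c₁⟩ and W|c₁⟩ = (⟨c₀|c₁⟩/⟨c₁|c₀⟩)|c₀⟩, and let V be the swap unitary on ℂ²⊗ℂ². Then the eight unitaries V², V, (W⊗𝟙)V(W⊗𝟙), (V(W⊗𝟙))², W⊗𝟙, (W⊗𝟙)V, V(W⊗𝟙)V, V(W⊗𝟙) are pairwise distinct as maps on the four states |c_k⟩⊗|c_l⟩ up to global phase, and each maps every state |c_k⟩⊗|c_l⟩ to a state of the form (phase)·|c_m⟩⊗|c_n⟩. -/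
open Matrix Kronecker

/-- The swap unitary V on ℂ²⊗ℂ², V(a⊗b) = b⊗a. -/
def V : Matrix (Fin 2 × Fin 2) (Fin 2 × Fin 2) ℂ :=
  Matrix.of fun a b => if a.1 = b.2 ∧ a.2 = b.1 then 1 else 0

def FF : Fin 8 → Fin 2 × Fin 2 → Fin 2 × Fin 2 :=
  ![fun p => p, fun p => (p.2, p.1), fun p => (p.2+1, p.1+1), fun p => (p.1+1, p.2+1),
    fun p => (p.1+1, p.2), fun p => (p.2+1, p.1), fun p => (p.1, p.2+1), fun p => (p.2, p.1+1)]

lemma FF_inj : ∀ i j : Fin 8, FF i (0,0) = FF j (0,0) → FF i (0,1) = FF j (0,1) → i = j := by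
  decide

lemma V_tv (a b : Fin 2 → ℂ) : V.mulVec (tv a b) = tv b a := by
  funext p
  obtain ⟨p1, p2⟩ := p
  fin_cases p1 <;> fin_cases p2 <;>
    simp [Matrix.mulVec, dotProduct, V, tv, Fintype.sum_prod_type, Fin.sum_univ_two] <;> ring

lemma K_tv (W : Matrix (Fin 2) (Fin 2) ℂ) (a b : Fin 2 → ℂ) :
    (W ⊗ₖ (1 : Matrix (Fin 2) (Fin 2) ℂ)).mulVec (tv a b) = tv (W.mulVec a) b := by
  funext p
  obtain ⟨p1, p2⟩ := p
  fin_cases p1 <;> fin_cases p2 <;>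
    simp [Matrix.mulVec, dotProduct, tv, Fintype.sum_prod_type, Fin.sum_univ_two,
      Matrix.kroneckerMap_apply, Matrix.one_apply] <;> ring

lemma tv_smul_left (z : ℂ) (a b : Fin 2 → ℂ) : tv (z • a) b = z • tv a b := by
  funext p; simp [tv]; ring

lemma dot_tv (a b a' b' : Fin 2 → ℂ) :
    star (tv a b) ⬝ᵥ tv a' b' = inp a a' * inp b b' := by
  simp [inp, tv, dotProduct, Fintype.sum_prod_type, Fin.sum_univ_two]
  ring


/-- Given free states c₀, c₁ with 0 < |⟨c₀|c₁⟩| < 1 and the flip unitary W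
(W c₀ = c₁, W c₁ = (⟨c₀|c₁⟩/⟨c₁|c₀⟩) c₀), the eight unitaries
V², V, (W⊗𝟙)V(W⊗𝟙), (V(W⊗𝟙))², W⊗𝟙, (W⊗𝟙)V, V(W⊗𝟙)V, V(W⊗𝟙) each map every
|c_k⟩⊗|c_l⟩ to a phase times some |c_m⟩⊗|c_n⟩, and are pairwise distinct as maps
on the four free products up to global phase. -/
theorem stmt_17 (c₀ c₁ : Fin 2 → ℂ) (h₀ : inp c₀ c₀ = 1) (h₁ : inp c₁ c₁ = 1)
    (hlow : 0 < ‖inp c₀ c₁‖) (hup : ‖inp c₀ c₁‖ < 1)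
    (W : Matrix (Fin 2) (Fin 2) ℂ) (hW : W ∈ Matrix.unitaryGroup (Fin 2) ℂ)
    (hW0 : W.mulVec c₀ = c₁)
    (hW1 : W.mulVec c₁ = (inp c₀ c₁ / inp c₁ c₀) • c₀)
    (c : Fin 2 → Fin 2 → ℂ) (hc : c = ![c₀, c₁])
    (W1 : Matrix (Fin 2 × Fin 2) (Fin 2 × Fin 2) ℂ)
    (hW1' : W1 = W ⊗ₖ (1 : Matrix (Fin 2) (Fin 2) ℂ))
    (L : Fin 8 → Matrix (Fin 2 × Fin 2) (Fin 2 × Fin 2) ℂ)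
    (hL : L = ![V * V, V, W1 * V * W1, (V * W1) ^ 2, W1, W1 * V, V * W1 * V, V * W1]) :
    (∀ i : Fin 8, ∀ k l : Fin 2, ∃ (z : ℂ) (m n : Fin 2),
      ‖z‖ = 1 ∧ (L i).mulVec (tv (c k) (c l)) = z • tv (c m) (c n)) ∧
    (∀ i j : Fin 8, i ≠ j → ¬ ∃ z : ℂ, ‖z‖ = 1 ∧
      ∀ k l : Fin 2, (L i).mulVec (tv (c k) (c l)) = z • (L j).mulVec (tv (c k) (c l))) := by
  have hc0 : c 0 = c₀ := by rw [hc]; rfl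
  have hc1 : c 1 = c₁ := by rw [hc]; rfl
  have hconj : inp c₁ c₀ = starRingEnd ℂ (inp c₀ c₁) := by
    simp [inp, dotProduct, map_sum, Fin.sum_univ_two, mul_comm]
  have hnz : inp c₀ c₁ ≠ 0 := by
    intro h; rw [h] at hlow; simp at hlow
  set ω : ℂ := inp c₀ c₁ / inp c₁ c₀ with hωdef
  have hωabs : ‖ω‖ = 1 := by
    rw [hωdef, norm_div, hconj, Complex.norm_conj, div_self]
    simpa using hnz
  set ph : Fin 2 → ℂ := ![1, ω] with hph
  have hphabs : ∀ k, ‖ph k‖ = 1 := by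
    intro k; fin_cases k <;> simp [hph, hωabs]
  have hWc : ∀ k, W.mulVec (c k) = ph k • c (k + 1) := by
    intro k; fin_cases k <;> simp [hph, hc0, hc1, hW0, hW1]
  have hK : ∀ a b, W1.mulVec (tv a b) = tv (W.mulVec a) b := by
    intro a b; rw [hW1']; exact K_tv W a b
  have hL0 : L 0 = V * V := by rw [hL]; rfl
  have hL1 : L 1 = V := by rw [hL]; rfl
  have hL2 : L 2 = W1 * V * W1 := by rw [hL]; rfl
  have hL3 : L 3 = (V * W1) ^ 2 := by rw [hL]; rfl
  have hL4 : L 4 = W1 := by rw [hL]; rfl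
  have hL5 : L 5 = W1 * V := by rw [hL]; rfl
  have hL6 : L 6 = V * W1 * V := by rw [hL]; rfl
  have hL7 : L 7 = V * W1 := by rw [hL]; rfl
  have e0 : ∀ k l : Fin 2, (L 0).mulVec (tv (c k) (c l)) = (1 : ℂ) • tv (c k) (c l) := by
    intro k l
    rw [hL0, ← Matrix.mulVec_mulVec, V_tv, V_tv, one_smul]
  have e1 : ∀ k l : Fin 2, (L 1).mulVec (tv (c k) (c l)) = (1 : ℂ) • tv (c l) (c k) := by
    intro k l
    rw [hL1, V_tv, one_smul]
  have e2 : ∀ k l : Fin 2, (L 2).mulVec (tv (c k) (c l)) =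
      (ph k * ph l) • tv (c (l+1)) (c (k+1)) := by
    intro k l
    rw [hL2, ← Matrix.mulVec_mulVec, ← Matrix.mulVec_mulVec, hK, hWc, tv_smul_left,
      Matrix.mulVec_smul, V_tv, Matrix.mulVec_smul, hK, hWc, tv_smul_left, smul_smul]
  have e3 : ∀ k l : Fin 2, (L 3).mulVec (tv (c k) (c l)) =
      (ph k * ph l) • tv (c (k+1)) (c (l+1)) := by
    intro k l
    rw [hL3, sq, ← Matrix.mulVec_mulVec, ← Matrix.mulVec_mulVec, ← Matrix.mulVec_mulVec,
      hK, hWc, tv_smul_left, Matrix.mulVec_smul, V_tv, Matrix.mulVec_smul, hK, hWc,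
      tv_smul_left, Matrix.mulVec_smul, Matrix.mulVec_smul, V_tv, smul_smul]
  have e4 : ∀ k l : Fin 2, (L 4).mulVec (tv (c k) (c l)) = ph k • tv (c (k+1)) (c l) := by
    intro k l
    rw [hL4, hK, hWc, tv_smul_left]
  have e5 : ∀ k l : Fin 2, (L 5).mulVec (tv (c k) (c l)) = ph l • tv (c (l+1)) (c k) := by
    intro k l
    rw [hL5, ← Matrix.mulVec_mulVec, V_tv, hK, hWc, tv_smul_left]
  have e6 : ∀ k l : Fin 2, (L 6).mulVec (tv (c k) (c l)) = ph l • tv (c k) (c (l+1)) := by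
    intro k l
    rw [hL6, ← Matrix.mulVec_mulVec, ← Matrix.mulVec_mulVec, V_tv, hK, hWc,
      tv_smul_left, Matrix.mulVec_smul, V_tv]
  have e7 : ∀ k l : Fin 2, (L 7).mulVec (tv (c k) (c l)) = ph k • tv (c l) (c (k+1)) := by
    intro k l
    rw [hL7, ← Matrix.mulVec_mulVec, hK, hWc, tv_smul_left, Matrix.mulVec_smul, V_tv]
  have habs2 : ∀ k l : Fin 2, ‖ph k * ph l‖ = 1 := by
    intro k l; rw [norm_mul, hphabs, hphabs, one_mul]
  have master : ∀ (i : Fin 8) (k l : Fin 2), ∃ z : ℂ, ‖z‖ = 1 ∧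
      (L i).mulVec (tv (c k) (c l)) = z • tv (c ((FF i (k,l)).1)) (c ((FF i (k,l)).2)) := by
    intro i k l
    fin_cases i
    · exact ⟨1, by simp, e0 k l⟩
    · exact ⟨1, by simp, e1 k l⟩
    · exact ⟨ph k * ph l, habs2 k l, e2 k l⟩
    · exact ⟨ph k * ph l, habs2 k l, e3 k l⟩
    · exact ⟨ph k, hphabs k, e4 k l⟩
    · exact ⟨ph l, hphabs l, e5 k l⟩
    · exact ⟨ph l, hphabs l, e6 k l⟩
    · exact ⟨ph k, hphabs k, e7 k l⟩
  have e10 : ‖inp c₁ c₀‖ = ‖inp c₀ c₁‖ := by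
    rw [hconj, Complex.norm_conj]
  have habsin : ∀ a b : Fin 2, ‖inp (c a) (c b)‖ =
      if a = b then 1 else ‖inp c₀ c₁‖ := by
    intro a b
    match a, b with
    | 0, 0 => simp [hc0, h₀]
    | 0, 1 => simp [hc0, hc1]
    | 1, 0 => simp [hc0, hc1, e10]
    | 1, 1 => simp [hc1, h₁]
  have keyA : ∀ (m n m' n' : Fin 2) (u v : ℂ), ‖u‖ = 1 → ‖v‖ = 1 →
      u • tv (c m) (c n) = v • tv (c m') (c n') → (m, n) = (m', n') := by
    intro m n m' n' u v hu hv heq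
    have hnorm : ∀ a : Fin 2, inp (c a) (c a) = 1 := by
      intro a
      match a with
      | 0 => rw [hc0]; exact h₀
      | 1 => rw [hc1]; exact h₁
    have h2 := congrArg (fun w => star (tv (c m') (c n')) ⬝ᵥ w) heq
    simp only [dotProduct_smul, dot_tv, smul_eq_mul, hnorm, mul_one] at h2
    have h3 := congrArg (‖·‖) h2
    rw [norm_mul, norm_mul, hu, hv, one_mul, habsin, habsin] at h3
    by_cases hm : m' = m <;> by_cases hn : n' = n
    · rw [hm, hn]
    · exfalso; simp [hm, hn] at h3; linarith
    · exfalso; simp [hm, hn] at h3; linarith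
    · exfalso; simp [hm, hn] at h3; nlinarith [hlow, hup]
  constructor
  · intro i k l
    obtain ⟨z, hz, heq⟩ := master i k l
    exact ⟨z, (FF i (k,l)).1, (FF i (k,l)).2, hz, heq⟩
  · rintro i j hij ⟨z, hz, heq⟩
    apply hij
    apply FF_inj
    · obtain ⟨z1, hz1, he1⟩ := master i 0 0
      obtain ⟨z2, hz2, he2⟩ := master j 0 0
      have h := heq 0 0
      rw [he1, he2, smul_smul] at h
      have habs : ‖z * z2‖ = 1 := by rw [norm_mul, hz, hz2, one_mul]
      exact keyA _ _ _ _ _ _ hz1 habs h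
    · obtain ⟨z1, hz1, he1⟩ := master i 0 1
      obtain ⟨z2, hz2, he2⟩ := master j 0 1
      have h := heq 0 1
      rw [he1, he2, smul_smul] at h
      have habs : ‖z * z2‖ = 1 := by rw [norm_mul, hz, hz2, one_mul]
      exact keyA _ _ _ _ _ _ hz1 habs h
end
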